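/- Let A be a finite set with at least 2 elements and let R be a finite set of local rules on A all of radius r. The set Surj(R) = { θ : ℤ → R : H_θ is surjective } is a subshift of R^ℤ: it is closed for the product topology, invariant under the shift (σ(Surj(R)) = Surj(R) where σ(θ)_i = θ_{i+1}), and it equals the set of distributions θ such that no finite factor θ_{[i,j]} (i ≤ j) belongs to F_R = { ψ ∈ R^* : h_ψ is not surjective }. -/

import Mathlib

/-- The r-ν-CA induced by the distribution `θ : ℤ → R`, where `rule ρ` is the local
rule of radius `r` indexed by `ρ ∈ R`. -/
def nuCA {A R : Type*} (r : ℕ) (rule : R → (Fin (2 * r + 1) → A) → A)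
    (θ : ℤ → R) (x : ℤ → A) : ℤ → A :=
  fun i => rule (θ i) (fun k => x (i - (r : ℤ) + (k : ℕ)))

/-- `Surj(R) = {θ : H_θ surjective}` is a subshift of `R^ℤ`: it is
closed for the product topology, shift-invariant, and equals the set of
distributions none of whose finite factors `θ_{[i,j]}` lies in
`F_R = {ψ : h_ψ not surjective}` (i.e. all partial transition functions of `θ`
are surjective). -/
theorem stmt7 {A : Type*} [Fintype A] (hA : 2 ≤ Fintype.card A) (r : ℕ)
    {R : Type*} [Fintype R] [TopologicalSpace R] [DiscreteTopology R]
    (rule : R → (Fin (2 * r + 1) → A) → A) :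
    IsClosed {θ : ℤ → R | Function.Surjective (nuCA r rule θ)}
    ∧ (fun θ : ℤ → R => fun i : ℤ => θ (i + 1)) ''
          {θ : ℤ → R | Function.Surjective (nuCA r rule θ)}
        = {θ : ℤ → R | Function.Surjective (nuCA r rule θ)}
    ∧ {θ : ℤ → R | Function.Surjective (nuCA r rule θ)}
        = {θ : ℤ → R | ∀ i j : ℤ, i ≤ j → ∀ u : ℤ → A, ∃ w : ℤ → A,
            ∀ m : ℤ, i ≤ m → m ≤ j →
              rule (θ m) (fun k => w (m - (r : ℤ) + (k : ℕ))) = u m} := by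
  classical
  letI : TopologicalSpace A := ⊥
  haveI : DiscreteTopology A := ⟨rfl⟩
  -- Key equivalence: global surjectivity ↔ all partial transition functions surjective.
  have key : ∀ θ : ℤ → R, Function.Surjective (nuCA r rule θ) ↔
      (∀ i j : ℤ, i ≤ j → ∀ u : ℤ → A, ∃ w : ℤ → A, ∀ m : ℤ, i ≤ m → m ≤ j →
        rule (θ m) (fun k => w (m - (r : ℤ) + (k : ℕ))) = u m) := by
    intro θ
    constructor
    · intro hs i j _ u
      obtain ⟨w, hw⟩ := hs u
      exact ⟨w, fun m _ _ => congrFun hw m⟩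
    · intro hP u
      have hle : ∀ n : ℕ, -(n : ℤ) ≤ (n : ℤ) := fun n =>
        le_trans (neg_nonpos.mpr n.cast_nonneg) n.cast_nonneg
      choose wseq hwseq using fun n : ℕ => hP (-(n : ℤ)) n (hle n) u
      obtain ⟨w, hw⟩ := exists_clusterPt_of_compactSpace (Filter.map wseq Filter.atTop)
      refine ⟨w, funext fun m => ?_⟩
      set S : Finset ℤ := Finset.image (fun k : Fin (2 * r + 1) => m - (r : ℤ) + ((k : ℕ) : ℤ))
        Finset.univ with hS
      have hopen : IsOpen (Set.pi (↑S) (fun s => ({w s} : Set A))) :=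
        isOpen_set_pi S.finite_toSet (fun i _ => isOpen_discrete _)
      have hmem : w ∈ Set.pi (↑S) (fun s => ({w s} : Set A)) := fun s _ => rfl
      have hfreq := (mapClusterPt_iff_frequently.mp hw) _ (hopen.mem_nhds hmem)
      obtain ⟨n, hn, hnS⟩ := Filter.frequently_atTop.mp hfreq m.natAbs
      have h1 : -(n : ℤ) ≤ m := by omega
      have h2 : m ≤ (n : ℤ) := by omega
      have heq : (fun k : Fin (2 * r + 1) => w (m - (r : ℤ) + ((k : ℕ) : ℤ)))
          = fun k : Fin (2 * r + 1) => wseq n (m - (r : ℤ) + ((k : ℕ) : ℤ)) := by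
        funext k
        have hk : (m - (r : ℤ) + ((k : ℕ) : ℤ)) ∈ (↑S : Set ℤ) := by
          simp [hS]
        exact (hnS _ hk).symm
      show rule (θ m) (fun k => w (m - (r : ℤ) + ((k : ℕ) : ℤ))) = u m
      rw [heq]
      exact hwseq n m h1 h2
  have eq3 : {θ : ℤ → R | Function.Surjective (nuCA r rule θ)}
      = {θ : ℤ → R | ∀ i j : ℤ, i ≤ j → ∀ u : ℤ → A, ∃ w : ℤ → A,
          ∀ m : ℤ, i ≤ m → m ≤ j →
            rule (θ m) (fun k => w (m - (r : ℤ) + (k : ℕ))) = u m} :=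
    Set.ext fun θ => key θ
  refine ⟨?_, ?_, eq3⟩
  · -- closed
    rw [eq3]
    rw [← isOpen_compl_iff]
    rw [isOpen_iff_forall_mem_open]
    intro θ hθ
    simp only [Set.mem_compl_iff, Set.mem_setOf_eq, not_forall] at hθ
    obtain ⟨i, j, hij, u, hu⟩ := hθ
    refine ⟨{θ' : ℤ → R | ∀ s ∈ (Finset.Icc i j : Finset ℤ), θ' s = θ s}, ?_, ?_, ?_⟩
    · intro θ' hθ' hmem
      refine hu ?_
      obtain ⟨w, hwp⟩ := hmem i j hij u
      exact ⟨w, fun m hm1 hm2 => by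
        rw [← hθ' m (Finset.mem_Icc.mpr ⟨hm1, hm2⟩)]
        exact hwp m hm1 hm2⟩
    · have : {θ' : ℤ → R | ∀ s ∈ (Finset.Icc i j : Finset ℤ), θ' s = θ s}
          = Set.pi (↑(Finset.Icc i j)) (fun s => ({θ s} : Set R)) := by
        ext θ'; simp [Set.pi]
      rw [this]
      exact isOpen_set_pi (Finset.Icc i j).finite_toSet (fun i _ => isOpen_discrete _)
    · intro s _; rfl
  · -- shift invariance
    have hshift : ∀ θ : ℤ → R, Function.Surjective (nuCA r rule θ) ↔
        Function.Surjective (nuCA r rule (fun i => θ (i + 1))) := by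
      intro θ
      constructor
      · intro hs u
        obtain ⟨y, hy⟩ := hs (fun i => u (i - 1))
        refine ⟨fun i => y (i + 1), funext fun i => ?_⟩
        have := congrFun hy (i + 1)
        simp only [nuCA] at this ⊢
        rw [show (i + 1 - (r : ℤ)) = i - (r : ℤ) + 1 by ring] at this
        simpa [show ∀ k : ℤ, i - (r:ℤ) + 1 + k = i - (r:ℤ) + k + 1 by intro k; ring]
          using this
      · intro hs u
        obtain ⟨y, hy⟩ := hs (fun i => u (i + 1))
        refine ⟨fun i => y (i - 1), funext fun i => ?_⟩
        have := congrFun hy (i - 1)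
        simp only [nuCA] at this ⊢
        rw [show (i - 1 - (r : ℤ)) = i - (r : ℤ) - 1 by ring,
          show (i - 1 + 1) = i by ring] at this
        simpa [show ∀ k : ℤ, i - (r:ℤ) - 1 + k = i - (r:ℤ) + k - 1 by intro k; ring]
          using this
    ext η
    simp only [Set.mem_image, Set.mem_setOf_eq]
    constructor
    · rintro ⟨θ, hθ, rfl⟩
      exact (hshift θ).mp hθ
    · intro hη
      refine ⟨fun i => η (i - 1), ?_, funext fun i => by simp⟩
      have : (fun i : ℤ => η (i - 1 + 1)) = η := funext fun i => by simp
      have := (hshift (fun i => η (i - 1))).mpr (by simpa using hη)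
      -- need surjectivity of η shifted back equals η
      exact this
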